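/- Let a, b be integers and let p, q, r be distinct odd primes such that p divides both a+1 and b−1, q divides both a−1 and b+1, and r divides both a+1 and b+1. Then gcd(a^m − b^n, p·q·r) > 1 for all integers m, n ≥ 1. -/

import Mathlib

lemma gcd_gt_aux (x y : ℤ) (s : ℕ) (hs : s.Prime) (hy : y ≠ 0)
    (h1 : (s : ℤ) ∣ x) (h2 : (s : ℤ) ∣ y) : 1 < Int.gcd x y := by
  have hdvd : (s : ℤ) ∣ (Int.gcd x y : ℤ) := Int.dvd_coe_gcd h1 h2
  have hdvd' : s ∣ Int.gcd x y := Int.ofNat_dvd.mp hdvd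
  have hne : Int.gcd x y ≠ 0 := by
    simp [Int.gcd_eq_zero_iff, hy]
  have := Nat.le_of_dvd (Nat.pos_of_ne_zero hne) hdvd'
  have := hs.two_le
  omega

/-- If `p, q, r` are distinct odd primes with `p ∣ (a+1, b-1)`, `q ∣ (a-1, b+1)` and
`r ∣ (a+1, b+1)`, then `gcd(a^m - b^n, p*q*r) > 1` for all integers `m, n ≥ 1`. -/
theorem covering_example_mod_two
    (a b : ℤ) (p q r : ℕ)
    (hp : p.Prime) (hq : q.Prime) (hr : r.Prime)
    (hpodd : Odd p) (hqodd : Odd q) (hrodd : Odd r)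
    (hpq : p ≠ q) (hpr : p ≠ r) (hqr : q ≠ r)
    (hp1 : (p : ℤ) ∣ a + 1) (hp2 : (p : ℤ) ∣ b - 1)
    (hq1 : (q : ℤ) ∣ a - 1) (hq2 : (q : ℤ) ∣ b + 1)
    (hr1 : (r : ℤ) ∣ a + 1) (hr2 : (r : ℤ) ∣ b + 1) :
    ∀ m n : ℕ, 1 ≤ m → 1 ≤ n → 1 < Int.gcd (a ^ m - b ^ n) ((p : ℤ) * q * r) := by
  intro m n hm hn
  have hy : ((p : ℤ) * q * r) ≠ 0 := by
    exact mul_ne_zero (mul_ne_zero (Nat.cast_ne_zero.mpr hp.ne_zero) (Nat.cast_ne_zero.mpr hq.ne_zero)) (Nat.cast_ne_zero.mpr hr.ne_zero)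
  -- congruences
  have hap : a ≡ -1 [ZMOD p] := Int.ModEq.symm (Int.modEq_iff_dvd.mpr (by
    rw [show a - -1 = a + 1 by ring]; exact hp1))
  have hbp : b ≡ 1 [ZMOD p] := Int.ModEq.symm (Int.modEq_iff_dvd.mpr (by simpa using hp2))
  have haq : a ≡ 1 [ZMOD q] := Int.ModEq.symm (Int.modEq_iff_dvd.mpr (by simpa using hq1))
  have hbq : b ≡ -1 [ZMOD q] := Int.ModEq.symm (Int.modEq_iff_dvd.mpr (by simpa using hq2))
  have har : a ≡ -1 [ZMOD r] := Int.ModEq.symm (Int.modEq_iff_dvd.mpr (by simpa using hr1))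
  have hbr : b ≡ -1 [ZMOD r] := Int.ModEq.symm (Int.modEq_iff_dvd.mpr (by simpa using hr2))
  rcases Nat.even_or_odd m with hme | hmo
  · -- p divides: a^m ≡ 1, b^n ≡ 1
    apply gcd_gt_aux _ _ p hp hy
    · have : a ^ m - b ^ n ≡ (-1) ^ m - 1 ^ n [ZMOD p] := (hap.pow m).sub (hbp.pow n)
      rw [hme.neg_one_pow, one_pow, sub_self] at this
      exact (Int.modEq_zero_iff_dvd).mp this
    · exact ⟨(q : ℤ) * r, by ring⟩
  rcases Nat.even_or_odd n with hne | hno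
  · apply gcd_gt_aux _ _ q hq hy
    · have : a ^ m - b ^ n ≡ 1 ^ m - (-1) ^ n [ZMOD q] := (haq.pow m).sub (hbq.pow n)
      rw [hne.neg_one_pow, one_pow, sub_self] at this
      exact (Int.modEq_zero_iff_dvd).mp this
    · exact ⟨(p : ℤ) * r, by ring⟩
  · apply gcd_gt_aux _ _ r hr hy
    · have : a ^ m - b ^ n ≡ (-1) ^ m - (-1) ^ n [ZMOD r] := (har.pow m).sub (hbr.pow n)
      rw [hmo.neg_one_pow, hno.neg_one_pow, sub_self] at this
      exact (Int.modEq_zero_iff_dvd).mp this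
    · exact ⟨(p : ℤ) * q, by ring⟩
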